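/- Let β ∈ ℝ be a constant, let γ : ℝ → ℝ be an affine function γ(t) = γ₀ + μt, let δ : ℝ → ℝ be a polynomial of degree at most 2, and let ε : ℝ → ℝ be a polynomial of degree at most 3. Suppose for all t ∈ ℝ: (β² − γ(t))·ε(t) + δ(t)² + μ² − 2β·γ(t)·δ(t) + γ(t)³ = 0. Then μ = 0, i.e. γ is constant. -/
import Mathlib


theorem gamma_t_eq_zero (β γ₀ μ : ℝ) (δ ε : Polynomial ℝ)
    (hδ : δ.degree ≤ 2) (hε : ε.degree ≤ 3)
    (h : ∀ t : ℝ,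
      (β ^ 2 - (γ₀ + μ * t)) * ε.eval t + (δ.eval t) ^ 2 + μ ^ 2
        - 2 * β * (γ₀ + μ * t) * δ.eval t + (γ₀ + μ * t) ^ 3 = 0) :
    μ = 0 := by
  by_contra hμ
  have ht := h ((β ^ 2 - γ₀) / μ)
  rw [mul_div_cancel₀ _ hμ] at ht
  have key : (δ.eval ((β ^ 2 - γ₀) / μ) - β ^ 3) ^ 2 + μ ^ 2 = 0 := by ring_nf; ring_nf at ht; linarith
  have h2 : 0 < μ ^ 2 := by positivity
  nlinarith [sq_nonneg (δ.eval ((β ^ 2 - γ₀) / μ) - β ^ 3)]
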